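/- Suppose r is odd. Then for every β ∈ F_q, the number n₂(β) of w ∈ O^-(2,q) with Tr(w) = β equals: 0 if β² − 1 is a nonzero square in F_q; 1 if β² − 1 = 0; 2 if β² − 1 is a nonsquare different from −1; and q+3 if β² − 1 = −1. -/

import Mathlib

open Matrix
open scoped BigOperators Classical

noncomputable section

abbrev Fq (r : ℕ) : Type := GaloisField 3 r
noncomputable instance (r : ℕ) : Fintype (Fq r) := Fintype.ofFinite _

def deltaEps (r : ℕ) (ε : Fq r) : Matrix (Fin 2) (Fin 2) (Fq r) := !![1, 0; 0, -ε]

def Ominus2 (r : ℕ) (ε : Fq r) : Finset (Matrix (Fin 2) (Fin 2) (Fq r)) :=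
  Finset.univ.filter (fun w => IsUnit w.det ∧ wᵀ * deltaEps r ε * w = deltaEps r ε)

/-- `n₂(β)`, the number of elements of `O⁻(2, q)` with trace `β`. -/
def nTwo (r : ℕ) (ε : Fq r) (β : Fq r) : ℕ :=
  ((Ominus2 r ε).filter (fun w => w.trace = β)).card

/-! ### Auxiliary lemmas -/

lemma Fq.three_eq_zero (r : ℕ) : (3 : Fq r) = 0 := CharP.cast_eq_zero (Fq r) 3

lemma Fq.two_ne_zero (r : ℕ) : (2 : Fq r) ≠ 0 := by
  have h3 : ringChar (Fq r) = 3 := ringChar.eq _ 3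
  intro h
  have := (ringChar.spec (Fq r) 2).mp (by exact_mod_cast h)
  rw [h3] at this
  omega

lemma Fq.card (r : ℕ) (hr : 0 < r) : Fintype.card (Fq r) = 3 ^ r := by
  rw [← Nat.card_eq_fintype_card]
  exact GaloisField.card 3 r hr.ne'

lemma Fq.pow_mod_four (r : ℕ) (hrodd : Odd r) : 3 ^ r % 4 = 3 := by
  obtain ⟨k, rfl⟩ := hrodd
  rw [pow_add, pow_mul, Nat.mul_mod, Nat.pow_mod]
  norm_num

lemma Fq.neg_one_not_square (r : ℕ) (hr : 0 < r) (hrodd : Odd r) :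
    ¬ IsSquare (-1 : Fq r) := by
  rw [FiniteField.isSquare_neg_one_iff, Fq.card r hr, Fq.pow_mod_four r hrodd]
  simp

lemma nonsq_ne_zero {r : ℕ} {a : Fq r} (h : ¬ IsSquare a) : a ≠ 0 := by
  rintro rfl; exact h ⟨0, by ring⟩

lemma nonsq_mul_nonsq {r : ℕ} {a b : Fq r} (ha : ¬ IsSquare a) (hb : ¬ IsSquare b) :
    IsSquare (a * b) := by
  have ha0 := nonsq_ne_zero ha
  have hb0 := nonsq_ne_zero hb
  have hχa : quadraticChar (Fq r) a = -1 := (quadraticChar_neg_one_iff_not_isSquare).mpr ha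
  have hχb : quadraticChar (Fq r) b = -1 := (quadraticChar_neg_one_iff_not_isSquare).mpr hb
  have : quadraticChar (Fq r) (a * b) = 1 := by rw [_root_.map_mul, hχa, hχb]; ring
  exact (quadraticChar_one_iff_isSquare (mul_ne_zero ha0 hb0)).mp this

lemma nonsq_inv {r : ℕ} {a : Fq r} (h : ¬ IsSquare a) : ¬ IsSquare a⁻¹ := by
  rintro ⟨s, hs⟩
  exact h ⟨s⁻¹, by rw [← mul_inv, ← hs, inv_inv]⟩

/-! ### The two families of elements of `O⁻(2,q)` -/

def Rm {r : ℕ} (ε a c : Fq r) : Matrix (Fin 2) (Fin 2) (Fq r) := !![a, ε*c; c, a]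
def Sm {r : ℕ} (ε a c : Fq r) : Matrix (Fin 2) (Fin 2) (Fq r) := !![a, -(ε*c); c, -a]

lemma transpose_fin2 {r : ℕ} (a b c d : Fq r) : (!![a,b;c,d])ᵀ = !![a,c;b,d] := by
  ext i j; fin_cases i <;> fin_cases j <;> simp

lemma mem_Ominus2 {r : ℕ} {ε : Fq r} (hε : ¬ IsSquare ε) (w : Matrix (Fin 2) (Fin 2) (Fq r)) :
    w ∈ Ominus2 r ε ↔ ∃ a c : Fq r, a^2 - ε*c^2 = 1 ∧ (w = Rm ε a c ∨ w = Sm ε a c) := by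
  have hε0 : ε ≠ 0 := nonsq_ne_zero hε
  constructor
  · rintro hw
    rw [Ominus2, Finset.mem_filter] at hw
    obtain ⟨-, -, h⟩ := hw
    obtain ⟨a, b, c, d, hw⟩ : ∃ a b c d, w = !![a,b;c,d] :=
      ⟨w 0 0, w 0 1, w 1 0, w 1 1, Matrix.eta_fin_two w⟩
    subst hw
    rw [transpose_fin2, deltaEps, Matrix.mul_fin_two, Matrix.mul_fin_two] at h
    have e := Matrix.ext_iff.mpr h
    have h00 := e 0 0; have h01 := e 0 1; have h11 := e 1 1
    simp at h00 h01 h11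
    have e1 : a^2 - ε*c^2 = 1 := by linear_combination h00
    have e2 : a*b - ε*(c*d) = 0 := by linear_combination h01
    have e3 : b^2 - ε*d^2 = -ε := by linear_combination h11
    have hd2 : (d - a) * (d + a) = 0 := by
      have h5 : ε * ((d-a)*(d+a)) = 0 := by
        linear_combination (-(ε*d^2)) * e1 + (a*b + ε*(c*d)) * e2 - a^2 * e3
      exact (mul_eq_zero.mp h5).resolve_left hε0
    by_cases ha : a = 0
    · subst ha
      have hd0 : d = 0 := by
        have : d^2 = 0 := by linear_combination hd2
        exact sq_eq_zero_iff.mp this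
      subst hd0
      have hbc : (b - ε*c) * (b + ε*c) = 0 := by linear_combination e3 + ε*e1
      rcases mul_eq_zero.mp hbc with h | h
      · have hb : b = ε*c := by linear_combination h
        exact ⟨0, c, by linear_combination e1,
          Or.inl (by ext i j; fin_cases i <;> fin_cases j <;> simp [Rm, hb])⟩
      · have hb : b = -(ε*c) := by linear_combination h
        exact ⟨0, c, by linear_combination e1,
          Or.inr (by ext i j; fin_cases i <;> fin_cases j <;> simp [Sm, hb])⟩
    · rcases mul_eq_zero.mp hd2 with h | h
      · have hda : d = a := by linear_combination h
        have hb : b = ε*c := by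
          have h6 : a * (b - ε*c) = 0 := by linear_combination e2 + ε*c*hda
          have := (mul_eq_zero.mp h6).resolve_left ha
          linear_combination this
        exact ⟨a, c, e1, Or.inl (by rw [Rm, hb, hda])⟩
      · have hda : d = -a := by linear_combination h
        have hb : b = -(ε*c) := by
          have h6 : a * (b + ε*c) = 0 := by linear_combination e2 + ε*c*h
          have := (mul_eq_zero.mp h6).resolve_left ha
          linear_combination this
        exact ⟨a, c, e1, Or.inr (by rw [Sm, hb, hda])⟩
  · rintro ⟨a, c, e1, hw | hw⟩ <;> subst hw <;>
      rw [Ominus2, Finset.mem_filter] <;>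
      refine ⟨Finset.mem_univ _, ?_, ?_⟩
    · have : (Rm ε a c).det = 1 := by
        rw [Rm, Matrix.det_fin_two_of]; linear_combination e1
      rw [this]; exact isUnit_one
    · rw [Rm, transpose_fin2, deltaEps, Matrix.mul_fin_two, Matrix.mul_fin_two]
      ext i j
      fin_cases i <;> fin_cases j <;> simp
      · linear_combination e1
      · ring
      · ring
      · linear_combination (-ε)*e1
    · have : (Sm ε a c).det = -1 := by
        rw [Sm, Matrix.det_fin_two_of]; linear_combination -e1
      rw [this]; exact isUnit_one.neg
    · rw [Sm, transpose_fin2, deltaEps, Matrix.mul_fin_two, Matrix.mul_fin_two]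
      ext i j
      fin_cases i <;> fin_cases j <;> simp
      · linear_combination e1
      · ring
      · ring
      · linear_combination (-ε)*e1

/-! ### Counting the conic `a² - ε c² = 1` -/

def sols (r : ℕ) (ε : Fq r) : Finset (Fq r × Fq r) :=
  Finset.univ.filter (fun p => p.1^2 - ε*p.2^2 = 1)

lemma card_sols {r : ℕ} (hr : 0 < r) {ε : Fq r} (hε : ¬ IsSquare ε) :
    (sols r ε).card = 3 ^ r + 1 := by
  have h2 : (2 : Fq r) ≠ 0 := Fq.two_ne_zero r
  have hden : ∀ t : Fq r, 1 - ε*t^2 ≠ 0 := by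
    intro t h
    have ht : t ≠ 0 := by rintro rfl; simp at h
    exact hε ⟨t⁻¹, by field_simp; linear_combination -h⟩
  set f : Fq r → Fq r × Fq r := fun t => ((1+ε*t^2)/(1-ε*t^2), 2*t/(1-ε*t^2)) with hf
  have hmem : ∀ t, f t ∈ sols r ε := by
    intro t
    simp only [sols, Finset.mem_filter, Finset.mem_univ, true_and, hf]
    rw [div_pow, div_pow, ← mul_div_assoc, ← sub_div,
        show (1+ε*t^2)^2 - ε*(2*t)^2 = (1-ε*t^2)^2 by ring,
        div_self (pow_ne_zero 2 (hden t))]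
  have hinj : Function.Injective f := by
    have hli : Function.LeftInverse (fun p : Fq r × Fq r => p.2/(1+p.1)) f := by
      intro t
      show (2*t/(1-ε*t^2))/(1+(1+ε*t^2)/(1-ε*t^2)) = t
      have e : (1:Fq r) + (1+ε*t^2)/(1-ε*t^2) = 2/(1-ε*t^2) := by
        rw [eq_div_iff (hden t), add_mul, div_mul_cancel₀ _ (hden t)]
        ring
      rw [e, div_div_div_cancel_right₀ (hden t), mul_div_cancel_left₀ t h2]
    exact hli.injective
  have hsub : sols r ε = insert ((-1 : Fq r), (0:Fq r)) (Finset.univ.image f) := by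
    apply Finset.Subset.antisymm
    · intro p hp
      obtain ⟨x, y⟩ := p
      simp only [sols, Finset.mem_filter, Finset.mem_univ, true_and] at hp
      by_cases hx : x = -1
      · subst hx
        have hy : y = 0 := by
          have h0 : ε*y^2 = 0 := by linear_combination -hp
          rcases mul_eq_zero.mp h0 with h | h
          · exact absurd h (nonsq_ne_zero hε)
          · exact sq_eq_zero_iff.mp h
        subst hy
        exact Finset.mem_insert_self _ _
      · have hx1 : x + 1 ≠ 0 := by
          intro h; exact hx (by linear_combination h)
        refine Finset.mem_insert_of_mem (Finset.mem_image.mpr ⟨y/(x+1), Finset.mem_univ _, ?_⟩)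
        rw [Prod.ext_iff]
        constructor
        · show (1+ε*(y/(x+1))^2)/(1-ε*(y/(x+1))^2) = x
          rw [div_eq_iff (hden _)]
          field_simp
          linear_combination (-(x+1))*hp
        · show 2*(y/(x+1))/(1-ε*(y/(x+1))^2) = y
          rw [div_eq_iff (hden _)]
          field_simp
          linear_combination (-y)*hp
    · intro p hp
      rcases Finset.mem_insert.mp hp with h | h
      · subst h
        simp [sols]
      · obtain ⟨t, -, rfl⟩ := Finset.mem_image.mp h
        exact hmem t
  have hnotmem : ((-1 : Fq r), (0:Fq r)) ∉ Finset.univ.image f := by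
    rw [Finset.mem_image]
    rintro ⟨t, -, ht⟩
    have h2' := congrArg Prod.snd ht
    have h1' := congrArg Prod.fst ht
    simp only [hf] at h2' h1'
    have ht0 : t = 0 := by
      have h4 := (div_eq_iff (hden t)).mp h2'
      have h2t : 2*t = 0 := by linear_combination h4
      rcases mul_eq_zero.mp h2t with h | h
      · exact absurd h h2
      · exact h
    subst ht0
    simp at h1'
    exact h2 (by linear_combination h1')
  rw [hsub, Finset.card_insert_of_notMem hnotmem,
      Finset.card_image_of_injective _ hinj, Finset.card_univ, Fq.card r hr]

/-! ### Counting square roots -/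

lemma card_sq_zero (r : ℕ) :
    (Finset.univ.filter fun c : Fq r => c^2 = (0:Fq r)).card = 1 := by
  have : (Finset.univ.filter fun c : Fq r => c^2 = (0:Fq r)) = {0} := by
    ext c; simp [sq_eq_zero_iff]
  rw [this, Finset.card_singleton]

lemma card_sq_nonsq {r : ℕ} {m : Fq r} (hm : ¬ IsSquare m) :
    (Finset.univ.filter fun c : Fq r => c^2 = m).card = 0 := by
  rw [Finset.card_eq_zero, Finset.filter_eq_empty_iff]
  intro c _ h
  exact hm ⟨c, by rw [← h]; ring⟩

lemma card_sq_sq {r : ℕ} {m : Fq r} (hm : IsSquare m) (hm0 : m ≠ 0) :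
    (Finset.univ.filter fun c : Fq r => c^2 = m).card = 2 := by
  obtain ⟨s, rfl⟩ := hm
  have hs : s ≠ 0 := by rintro rfl; simp at hm0
  have hss : s ≠ -s := by
    intro h
    have : (2:Fq r) * s = 0 := by linear_combination h
    rcases mul_eq_zero.mp this with h' | h'
    · exact Fq.two_ne_zero r h'
    · exact hs h'
  have : (Finset.univ.filter fun c : Fq r => c^2 = s*s) = {s, -s} := by
    ext c
    simp only [Finset.mem_filter, Finset.mem_univ, true_and, Finset.mem_insert,
      Finset.mem_singleton]
    constructor
    · intro h
      have : (c - s) * (c + s) = 0 := by linear_combination h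
      rcases mul_eq_zero.mp this with h' | h'
      · exact Or.inl (by linear_combination h')
      · exact Or.inr (by linear_combination h')
    · rintro (rfl | rfl) <;> ring
  rw [this, Finset.card_pair hss]

lemma filter_mul_sq {r : ℕ} {ε k : Fq r} (hε0 : ε ≠ 0) :
    (Finset.univ.filter fun c : Fq r => ε*c^2 = k)
      = (Finset.univ.filter fun c : Fq r => c^2 = ε⁻¹*k) := by
  ext c
  simp only [Finset.mem_filter, Finset.mem_univ, true_and]
  constructor
  · intro h; rw [← h]; field_simp
  · intro h; rw [h]; field_simp

/-! ### Trace computations and the two filter identities -/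

lemma trace_Rm {r : ℕ} (ε a c : Fq r) : (Rm ε a c).trace = a + a := by
  rw [Rm, Matrix.trace_fin_two_of]

lemma trace_Sm {r : ℕ} (ε a c : Fq r) : (Sm ε a c).trace = 0 := by
  rw [Sm, Matrix.trace_fin_two_of]; ring

lemma Rm_inj {r : ℕ} (ε a : Fq r) : Function.Injective (fun c => Rm ε a c) := by
  intro x y h
  simpa [Rm] using congrFun (congrFun h 1) 0

lemma Sm_inj {r : ℕ} (ε : Fq r) : Function.Injective (fun p : Fq r × Fq r => Sm ε p.1 p.2) := by
  intro x y h
  have h1 := congrFun (congrFun h 0) 0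
  have h2 := congrFun (congrFun h 1) 0
  simp [Sm] at h1 h2
  exact Prod.ext h1 h2

lemma filterA {r : ℕ} {ε β : Fq r} (hε : ¬ IsSquare ε) (hβ : β ≠ 0) :
    (Ominus2 r ε).filter (fun w => w.trace = β) =
      (Finset.univ.filter fun c : Fq r => ε*c^2 = β^2-1).image (fun c => Rm ε (-β) c) := by
  have h3 : (3:Fq r) = 0 := Fq.three_eq_zero r
  ext w
  simp only [Finset.mem_filter, Finset.mem_image, Finset.mem_univ, true_and]
  constructor
  · rintro ⟨hw, htr⟩
    rcases (mem_Ominus2 hε w).mp hw with ⟨a, c, e1, rfl | rfl⟩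
    · rw [trace_Rm] at htr
      have ha : a = -β := by linear_combination -htr + a*h3
      subst ha
      exact ⟨c, by linear_combination -e1, rfl⟩
    · rw [trace_Sm] at htr
      exact absurd htr.symm hβ
  · rintro ⟨c, hc, rfl⟩
    refine ⟨(mem_Ominus2 hε _).mpr ⟨-β, c, by linear_combination -hc, Or.inl rfl⟩, ?_⟩
    rw [trace_Rm]
    linear_combination (-β)*h3

lemma filterB {r : ℕ} {ε : Fq r} (hε : ¬ IsSquare ε) :
    (Ominus2 r ε).filter (fun w => w.trace = 0) =
      ((sols r ε).image fun p => Sm ε p.1 p.2)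
        ∪ ((Finset.univ.filter fun c : Fq r => ε*c^2 = -1).image (fun c => Rm ε 0 c)) := by
  ext w
  rw [Finset.mem_filter, Finset.mem_union]
  constructor
  · rintro ⟨hw, htr⟩
    rcases (mem_Ominus2 hε w).mp hw with ⟨a, c, e1, rfl | rfl⟩
    · rw [trace_Rm] at htr
      have ha : a = 0 := by
        have h2a : (2:Fq r)*a = 0 := by linear_combination htr
        exact (mul_eq_zero.mp h2a).resolve_left (Fq.two_ne_zero r)
      subst ha
      exact Or.inr (Finset.mem_image.mpr ⟨c,
        Finset.mem_filter.mpr ⟨Finset.mem_univ _, by linear_combination -e1⟩, rfl⟩)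
    · exact Or.inl (Finset.mem_image.mpr ⟨(a, c),
        Finset.mem_filter.mpr ⟨Finset.mem_univ _, e1⟩, rfl⟩)
  · rintro (h | h)
    · obtain ⟨p, hp, rfl⟩ := Finset.mem_image.mp h
      simp only [sols, Finset.mem_filter, Finset.mem_univ, true_and] at hp
      exact ⟨(mem_Ominus2 hε _).mpr ⟨p.1, p.2, hp, Or.inr rfl⟩, trace_Sm ε p.1 p.2⟩
    · obtain ⟨c, hc, rfl⟩ := Finset.mem_image.mp h
      rw [Finset.mem_filter] at hc
      exact ⟨(mem_Ominus2 hε _).mpr ⟨0, c, by linear_combination -hc.2, Or.inl rfl⟩,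
        by rw [trace_Rm]; ring⟩

lemma disjB {r : ℕ} {ε : Fq r} (hε : ¬ IsSquare ε) :
    Disjoint ((sols r ε).image fun p => Sm ε p.1 p.2)
      ((Finset.univ.filter fun c : Fq r => ε*c^2 = -1).image (fun c => Rm ε 0 c)) := by
  rw [Finset.disjoint_left]
  intro w hw1 hw2
  obtain ⟨⟨a, c⟩, hp, rfl⟩ := Finset.mem_image.mp hw1
  obtain ⟨c', hc', heq⟩ := Finset.mem_image.mp hw2
  rw [Finset.mem_filter] at hc'
  have h00 := congrFun (congrFun heq 0) 0
  have h01 := congrFun (congrFun heq 0) 1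
  have h10 := congrFun (congrFun heq 1) 0
  simp [Rm, Sm] at h00 h01 h10
  simp only [sols, Finset.mem_filter, Finset.mem_univ, true_and] at hp
  have hcc : c' = 0 := by
    have h2c : ε*((2:Fq r)*c') = 0 := by linear_combination h01 + ε*h10
    rcases mul_eq_zero.mp h2c with h | h
    · exact absurd h (nonsq_ne_zero hε)
    · rcases mul_eq_zero.mp h with h' | h'
      · exact absurd h' (Fq.two_ne_zero r)
      · exact h'
  have hc0 : c = 0 := by rw [← h10, hcc]
  rw [← h00, hc0] at hp
  simp at hp

theorem stmt16 (r : ℕ) (hr : 0 < r) (hrodd : Odd r) (ε : Fq r) (hε : ¬ IsSquare ε)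
    (β : Fq r) :
    (IsSquare (β ^ 2 - 1) ∧ β ^ 2 - 1 ≠ 0 → nTwo r ε β = 0)
    ∧ (β ^ 2 - 1 = 0 → nTwo r ε β = 1)
    ∧ (¬ IsSquare (β ^ 2 - 1) ∧ β ^ 2 - 1 ≠ -1 → nTwo r ε β = 2)
    ∧ (β ^ 2 - 1 = -1 → nTwo r ε β = 3 ^ r + 3) := by
  have hε0 : ε ≠ 0 := nonsq_ne_zero hε
  have hneg1 : ¬ IsSquare (-1 : Fq r) := Fq.neg_one_not_square r hr hrodd
  have hcardA : ∀ hβ : β ≠ 0, nTwo r ε β =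
      (Finset.univ.filter fun c : Fq r => c^2 = ε⁻¹*(β^2-1)).card := by
    intro hβ
    rw [nTwo, filterA hε hβ, Finset.card_image_of_injective _ (Rm_inj ε (-β)),
      filter_mul_sq hε0]
  refine ⟨?_, ?_, ?_, ?_⟩
  · rintro ⟨hsq, hne⟩
    have hβ : β ≠ 0 := by
      rintro rfl
      simp only [ne_eq, OfNat.ofNat_ne_zero, not_false_eq_true, zero_pow, zero_sub] at hsq
      exact hneg1 hsq
    rw [hcardA hβ]
    apply card_sq_nonsq
    rintro ⟨s, hs⟩
    have hsne : s ≠ 0 := by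
      rintro rfl
      simp at hs
      rcases hs with h | h
      · exact hε0 h
      · exact hne h
    obtain ⟨u, hu⟩ := hsq
    refine hε ⟨u*s⁻¹, ?_⟩
    have key : ε*(s*s) = β^2 - 1 := by rw [← hs]; field_simp
    field_simp
    linear_combination key + hu
  · intro h0
    have hβ : β ≠ 0 := by
      rintro rfl
      rw [show (0:Fq r)^2 - 1 = -1 by ring] at h0
      exact one_ne_zero (by linear_combination -h0 : (1:Fq r) = 0)
    rw [hcardA hβ, show ε⁻¹*(β^2-1) = 0 by rw [h0]; ring, card_sq_zero]
  · rintro ⟨hnsq, hne⟩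
    have hβ : β ≠ 0 := by
      rintro rfl
      exact hne (by ring)
    rw [hcardA hβ]
    apply card_sq_sq
    · exact nonsq_mul_nonsq (nonsq_inv hε) hnsq
    · refine mul_ne_zero (inv_ne_zero hε0) fun h => hnsq ?_
      rw [h]; exact ⟨0, by ring⟩
  · intro h0
    have hβ : β = 0 := by
      have : β^2 = 0 := by linear_combination h0
      exact sq_eq_zero_iff.mp this
    subst hβ
    rw [nTwo, filterB hε, Finset.card_union_of_disjoint (disjB hε),
      Finset.card_image_of_injective _ (Sm_inj ε),
      Finset.card_image_of_injective _ (Rm_inj ε 0),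
      card_sols hr hε, filter_mul_sq hε0,
      card_sq_sq (nonsq_mul_nonsq (nonsq_inv hε) hneg1)
        (mul_ne_zero (inv_ne_zero hε0) (by intro h; exact one_ne_zero (by linear_combination -h : (1:Fq r) = 0)))]
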